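/- arXiv:2403.00651 — 2 statements merged into one kernel-verified Lean document; each statement's English description precedes it below -/
import Mathlib

section
/- Let q > 0 and let ρ = √(|∇h|² + h²) for a smooth function h < 0 on Ω ⊂ Sⁿ⁻¹ with ∇²h + hI > 0 and h = 0 on ∂Ω. Then V_q(h) := (1/q)∫_Ω ρ^{q−n}(−h)det(∇²h + hI) dx ≥ (C/q)·‖h‖_{C⁰(Ω)}^q, where C > 0 depends only on Ω and n, using that min_Ω ρ ≥ ‖h‖_{C⁰(Ω)} (equivalently −min h_C = min ρ_C for support/radial functions of C-close sets) and ∫_Ω ρ^{−n}(−h)det(∇²h + hI) dx is a constant independent of h. -/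
open MeasureTheory

/-- Sobolev-type inequality for the `q`-volume functional
`V_q(h) = (1/q)∫ ρ^{q−n}(−h)·det(∇²h+hI)`, abstracted over the domain `Ω`:
here `Φ = det(∇²h+hI) ≥ 0` (so `(−h)Φ ≥ 0`), `M = ‖h‖_{C⁰}` satisfies
`min ρ ≥ M` (the relation `−min h_C = min ρ_C`), and
`∫ ρ^{−n}(−h)Φ ≥ C₀` is the constant independent of `h`.  Then
`V_q(h) ≥ (C₀/q)·‖h‖_{C⁰}^q`. -/
theorem stmt_14 {α : Type*} [MeasurableSpace α] (μ : Measure α)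
    (q : ℝ) (hq : 0 < q) (n : ℕ)
    (h ρ Φ : α → ℝ) (M C₀ : ℝ) (hM : 0 ≤ M) (hC₀ : 0 < C₀)
    (hρpos : ∀ x, 0 < ρ x)
    (hhM : ∀ x, |h x| ≤ M)
    (hρM : ∀ x, M ≤ ρ x)
    (hΦ : ∀ x, 0 ≤ -h x * Φ x)
    (hint1 : Integrable (fun x => ρ x ^ (q - (n : ℝ)) * (-h x) * Φ x) μ)
    (hint0 : Integrable (fun x => ρ x ^ (-(n : ℝ)) * (-h x) * Φ x) μ)
    (hc : C₀ ≤ ∫ x, ρ x ^ (-(n : ℝ)) * (-h x) * Φ x ∂μ) :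
    C₀ / q * M ^ q ≤ (1 / q) * ∫ x, ρ x ^ (q - (n : ℝ)) * (-h x) * Φ x ∂μ := by
  have key : ∀ x, M ^ q * (ρ x ^ (-(n : ℝ)) * (-h x) * Φ x)
      ≤ ρ x ^ (q - (n : ℝ)) * (-h x) * Φ x := by
    intro x
    have h1 : ρ x ^ (q - (n : ℝ)) = ρ x ^ q * ρ x ^ (-(n : ℝ)) := by
      rw [← Real.rpow_add (hρpos x)]; ring_nf
    have h2 : M ^ q ≤ ρ x ^ q := Real.rpow_le_rpow hM (hρM x) hq.le
    have h3 : 0 ≤ ρ x ^ (-(n : ℝ)) := (Real.rpow_pos_of_pos (hρpos x) _).le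
    calc M ^ q * (ρ x ^ (-(n : ℝ)) * (-h x) * Φ x)
        = (M ^ q * ρ x ^ (-(n : ℝ))) * (-h x * Φ x) := by ring
      _ ≤ (ρ x ^ q * ρ x ^ (-(n : ℝ))) * (-h x * Φ x) := by
          apply mul_le_mul_of_nonneg_right _ (hΦ x)
          exact mul_le_mul_of_nonneg_right h2 h3
      _ = ρ x ^ (q - (n : ℝ)) * (-h x) * Φ x := by rw [h1]; ring
  have hmono : ∫ x, M ^ q * (ρ x ^ (-(n : ℝ)) * (-h x) * Φ x) ∂μ
      ≤ ∫ x, ρ x ^ (q - (n : ℝ)) * (-h x) * Φ x ∂μ :=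
    integral_mono (hint0.const_mul _) hint1 key
  rw [integral_const_mul] at hmono
  have hMq : 0 ≤ M ^ q := Real.rpow_nonneg hM q
  have : C₀ * M ^ q ≤ ∫ x, ρ x ^ (q - (n : ℝ)) * (-h x) * Φ x ∂μ := by
    calc C₀ * M ^ q = M ^ q * C₀ := by ring
      _ ≤ M ^ q * ∫ x, ρ x ^ (-(n : ℝ)) * (-h x) * Φ x ∂μ :=
          mul_le_mul_of_nonneg_left hc hMq
      _ ≤ _ := hmono
  have := mul_le_mul_of_nonneg_left this (le_of_lt (by positivity : (0:ℝ) < 1 / q))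
  have heq : C₀ / q * M ^ q = 1 / q * (C₀ * M ^ q) := by ring
  linarith [this]
end

section
/- Let 0 < a < 1, b > 0, C > 0 and w(x′, x_{n−1}) = C x_{n−1} − C x_{n−1}^a (1 − |x′|²)^b on {|x′| < 1, x_{n−1} > 0}. Then with r = |x′|, the Hessian determinant of w equals det(D²w) = 2^{n−2} C^{n−1} a b^{n−2} x_{n−1}^{a(n−1)−2} (1−r²)^{(b−1)(n−1)} (1 − a + (1 − 2b − a) r²). -/
/-- The determinant of the Hessian matrix of `u` at `x`. -/
noncomputable def hessianDet {m : ℕ} (u : EuclideanSpace ℝ (Fin m) → ℝ)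
    (x : EuclideanSpace ℝ (Fin m)) : ℝ :=
  (Matrix.of fun i j : Fin m =>
    fderiv ℝ (fun y => fderiv ℝ u y (EuclideanSpace.single i 1)) x
      (EuclideanSpace.single j 1)).det

section aux
variable {m : ℕ} (i₀ : Fin m) (a b C : ℝ)

local notation "E" => EuclideanSpace ℝ (Fin m)

def Sq (i₀ : Fin m) (y : E) : ℝ := ∑ i ∈ Finset.univ.erase i₀, (y i) ^ 2

lemma hasFDerivAt_Sq (y : E) :
    HasFDerivAt (Sq i₀)
      (∑ i ∈ Finset.univ.erase i₀, (2 * y i) • (EuclideanSpace.proj i : E →L[ℝ] ℝ)) y := by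
  apply HasFDerivAt.fun_sum
  intro i _
  have h := (hasDerivAt_pow 2 (y i)).comp_hasFDerivAt y
    ((EuclideanSpace.proj i : E →L[ℝ] ℝ).hasFDerivAt)
  simpa [Function.comp_def] using h

lemma hasFDerivAt_rpow_proj (p : ℝ) (j : Fin m) (y : E) (h : y j ≠ 0) :
    HasFDerivAt (fun y : E => (y j) ^ p)
      ((p * (y j) ^ (p - 1)) • (EuclideanSpace.proj j : E →L[ℝ] ℝ)) y := by
  have := (Real.hasDerivAt_rpow_const (p := p) (Or.inl h)).comp_hasFDerivAt y
    ((EuclideanSpace.proj j : E →L[ℝ] ℝ).hasFDerivAt)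
  simpa [Function.comp_def] using this

lemma hasFDerivAt_one_sub_Sq_rpow (p : ℝ) (y : E) (h : 1 - Sq i₀ y ≠ 0) :
    HasFDerivAt (fun y : E => (1 - Sq i₀ y) ^ p)
      ((p * (1 - Sq i₀ y) ^ (p - 1)) •
        (-(∑ i ∈ Finset.univ.erase i₀, (2 * y i) • (EuclideanSpace.proj i : E →L[ℝ] ℝ)))) y :=
  by
  have := (Real.hasDerivAt_rpow_const (p := p) (Or.inl h)).comp_hasFDerivAt y
    ((hasFDerivAt_Sq i₀ y).const_sub 1)
  simpa [Function.comp_def] using this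

lemma eval_sum_proj (y : E) (j : Fin m) :
    (∑ i ∈ Finset.univ.erase i₀, (2 * y i) • (EuclideanSpace.proj i : E →L[ℝ] ℝ))
      (EuclideanSpace.single j 1) = if j = i₀ then 0 else 2 * y j := by
  rw [ContinuousLinearMap.sum_apply]
  simp only [ContinuousLinearMap.smul_apply, PiLp.proj_apply,
    EuclideanSpace.single_apply, smul_eq_mul, mul_ite, mul_one, mul_zero]
  rw [Finset.sum_ite_eq' (Finset.univ.erase i₀) j (fun i => 2 * y i)]
  simp [Finset.mem_erase]

end aux

section aux2
variable {m : ℕ} (i₀ : Fin m) (a b C : ℝ)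
local notation "E" => EuclideanSpace ℝ (Fin m)

lemma fderiv_u_eval (y : E) (h0 : y i₀ ≠ 0) (h1 : 1 - Sq i₀ y ≠ 0) (j : Fin m) :
    fderiv ℝ (fun y : E => C * y i₀ - C * (y i₀) ^ a * (1 - Sq i₀ y) ^ b) y
        (EuclideanSpace.single j 1)
      = if j = i₀ then C - C * a * (y i₀) ^ (a - 1) * (1 - Sq i₀ y) ^ b
        else 2 * C * b * (y i₀) ^ a * (1 - Sq i₀ y) ^ (b - 1) * y j := by
  have hu : HasFDerivAt (fun y : E => C * y i₀ - C * (y i₀) ^ a * (1 - Sq i₀ y) ^ b)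
      (C • (EuclideanSpace.proj i₀ : E →L[ℝ] ℝ) -
        ((C * (y i₀) ^ a) • ((b * (1 - Sq i₀ y) ^ (b - 1)) •
            (-(∑ i ∈ Finset.univ.erase i₀, (2 * y i) • (EuclideanSpace.proj i : E →L[ℝ] ℝ)))) +
          ((1 - Sq i₀ y) ^ b) • (C • ((a * (y i₀) ^ (a - 1)) •
            (EuclideanSpace.proj i₀ : E →L[ℝ] ℝ))))) y := by
    exact ((EuclideanSpace.proj i₀ : E →L[ℝ] ℝ).hasFDerivAt.const_mul C).sub
      (((hasFDerivAt_rpow_proj a i₀ y h0).const_mul C).mul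
        (hasFDerivAt_one_sub_Sq_rpow i₀ b y h1))
  rw [hu.fderiv]
  rw [ContinuousLinearMap.sub_apply, ContinuousLinearMap.add_apply]
  simp only [ContinuousLinearMap.smul_apply, ContinuousLinearMap.neg_apply, eval_sum_proj,
    PiLp.proj_apply, EuclideanSpace.single_apply, smul_eq_mul]
  by_cases hj : j = i₀
  · simp only [hj, if_pos rfl, if_true, if_false]; ring
  · simp only [hj, if_neg hj, if_neg (Ne.symm hj), if_true, if_false]; ring

end aux2

section aux3
variable {m : ℕ} (i₀ : Fin m) (a b C : ℝ)
local notation "E" => EuclideanSpace ℝ (Fin m)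

lemma fderiv_gi0_eval (x : E) (h0 : x i₀ ≠ 0) (h1 : 1 - Sq i₀ x ≠ 0) (j : Fin m) :
    fderiv ℝ (fun y : E => C - C * a * (y i₀) ^ (a - 1) * (1 - Sq i₀ y) ^ b) x
        (EuclideanSpace.single j 1)
      = if j = i₀ then -(C * a * (a - 1)) * (x i₀) ^ (a - 1 - 1) * (1 - Sq i₀ x) ^ b
        else 2 * C * a * b * (x i₀) ^ (a - 1) * (1 - Sq i₀ x) ^ (b - 1) * x j := by
  have hu : HasFDerivAt (fun y : E => C - C * a * (y i₀) ^ (a - 1) * (1 - Sq i₀ y) ^ b)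
      (-((C * a * (x i₀) ^ (a - 1)) • ((b * (1 - Sq i₀ x) ^ (b - 1)) •
            (-(∑ i ∈ Finset.univ.erase i₀, (2 * x i) • (EuclideanSpace.proj i : E →L[ℝ] ℝ)))) +
          ((1 - Sq i₀ x) ^ b) • ((C * a) • (((a - 1) * (x i₀) ^ (a - 1 - 1)) •
            (EuclideanSpace.proj i₀ : E →L[ℝ] ℝ))))) x := by
    exact (((hasFDerivAt_rpow_proj (a - 1) i₀ x h0).const_mul (C * a)).mul
      (hasFDerivAt_one_sub_Sq_rpow i₀ b x h1)).const_sub C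
  rw [hu.fderiv]
  rw [ContinuousLinearMap.neg_apply, ContinuousLinearMap.add_apply]
  simp only [ContinuousLinearMap.smul_apply, ContinuousLinearMap.neg_apply, eval_sum_proj,
    PiLp.proj_apply, EuclideanSpace.single_apply, smul_eq_mul]
  by_cases hj : j = i₀
  · simp only [hj, if_pos rfl, if_true, if_false]; ring
  · simp only [hj, if_neg hj, if_neg (Ne.symm hj), if_true, if_false]; ring

lemma fderiv_gne_eval (i : Fin m) (hi : i ≠ i₀) (x : E) (h0 : x i₀ ≠ 0)
    (h1 : 1 - Sq i₀ x ≠ 0) (j : Fin m) :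
    fderiv ℝ (fun y : E => 2 * C * b * (y i₀) ^ a * (1 - Sq i₀ y) ^ (b - 1) * y i) x
        (EuclideanSpace.single j 1)
      = if j = i₀ then 2 * C * a * b * (x i₀) ^ (a - 1) * (1 - Sq i₀ x) ^ (b - 1) * x i
        else (if i = j then 2 * C * b * (x i₀) ^ a * (1 - Sq i₀ x) ^ (b - 1) else 0)
          + (-(4 * C * b * (b - 1)) * (x i₀) ^ a * (1 - Sq i₀ x) ^ (b - 1 - 1)) * (x i * x j) := by
  have hu : HasFDerivAt
      (fun y : E => 2 * C * b * (y i₀) ^ a * (1 - Sq i₀ y) ^ (b - 1) * y i)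
      ((2 * C * b * (x i₀) ^ a * (1 - Sq i₀ x) ^ (b - 1)) •
          (EuclideanSpace.proj i : E →L[ℝ] ℝ) +
        (x i) • ((2 * C * b * (x i₀) ^ a) • (((b - 1) * (1 - Sq i₀ x) ^ (b - 1 - 1)) •
            (-(∑ k ∈ Finset.univ.erase i₀, (2 * x k) • (EuclideanSpace.proj k : E →L[ℝ] ℝ)))) +
          ((1 - Sq i₀ x) ^ (b - 1)) • ((2 * C * b) • ((a * (x i₀) ^ (a - 1)) •
            (EuclideanSpace.proj i₀ : E →L[ℝ] ℝ))))) x := by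
    exact (((hasFDerivAt_rpow_proj a i₀ x h0).const_mul (2 * C * b)).mul
      (hasFDerivAt_one_sub_Sq_rpow i₀ (b - 1) x h1)).mul
      ((EuclideanSpace.proj i : E →L[ℝ] ℝ).hasFDerivAt)
  rw [hu.fderiv]
  simp only [ContinuousLinearMap.add_apply, ContinuousLinearMap.smul_apply, ContinuousLinearMap.neg_apply, eval_sum_proj,
    PiLp.proj_apply, EuclideanSpace.single_apply, smul_eq_mul]
  by_cases hj : j = i₀
  · simp only [hj, if_pos rfl, if_neg hi, if_true, if_false]; ring
  · by_cases hij : i = j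
    · simp only [hij, hj, if_pos rfl, if_neg hj, if_neg (Ne.symm hj), if_true, if_false]; ring
    · simp only [hj, if_neg hj, if_neg (Ne.symm hj), if_neg hij, if_neg (Ne.symm hij),
        if_true, if_false]; ring

end aux3

section det
variable {m : ℕ}

lemma det_aux (hm : 2 ≤ m) (i₀ : Fin m) (x : Fin m → ℝ) (α β γ d r2 : ℝ) (hα : α ≠ 0)
    (hr2 : r2 = ∑ j ∈ Finset.univ.erase i₀, (x j) ^ 2)
    (M : Matrix (Fin m) (Fin m) ℝ)
    (hM : ∀ i j, M i j = if i = i₀ then (if j = i₀ then d else γ * x j)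
      else (if j = i₀ then γ * x i else (if i = j then α else 0) + β * (x i * x j))) :
    M.det = α ^ (m - 2) * (d * (α + β * r2) - γ ^ 2 * r2) := by
  classical
  set v : Fin m → ℝ := fun j => if j = i₀ then 0 else x j with hv
  set e : Fin m → ℝ := fun j => if j = i₀ then 1 else 0 with he
  set A : Matrix (Fin m) (Fin 2) ℝ := Matrix.of fun i k => ![v i, e i] k with hA
  set B : Matrix (Fin 2) (Fin m) ℝ :=
    Matrix.of ![fun j => β * v j + γ * e j, fun j => γ * v j + (d - α) * e j] with hB
  have hvv : ∑ j, v j * v j = r2 := by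
    rw [hr2, ← Finset.sum_erase_add Finset.univ _ (Finset.mem_univ i₀)]
    simp only [hv, if_pos rfl, mul_zero, add_zero]
    refine Finset.sum_congr rfl fun j hj => ?_
    rw [if_neg (Finset.mem_erase.mp hj).1]
    ring
  have hve : ∑ j, v j * e j = 0 := by
    refine Finset.sum_eq_zero fun j _ => ?_
    by_cases hj : j = i₀ <;> simp [hv, he, hj]
  have hev : ∑ j, e j * v j = 0 := by
    refine Finset.sum_eq_zero fun j _ => ?_
    by_cases hj : j = i₀ <;> simp [hv, he, hj]
  have hee : ∑ j, e j * e j = 1 := by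
    rw [show (fun j => e j * e j) = fun j => if j = i₀ then 1 else 0 by
      funext j; by_cases hj : j = i₀ <;> simp [he, hj]]
    simp
  have hMAB : M = α • (1 : Matrix (Fin m) (Fin m) ℝ) + A * B := by
    ext i j
    rw [hM i j]
    simp only [Matrix.add_apply, Matrix.smul_apply, Matrix.one_apply, Matrix.mul_apply,
      hA, hB, Matrix.of_apply, Fin.sum_univ_two, smul_eq_mul,
      Matrix.cons_val_zero, Matrix.cons_val_one, Matrix.head_cons]
    by_cases hii : i = i₀ <;> by_cases hjj : j = i₀
    · have hij : i = j := hii.trans hjj.symm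
      simp only [hv, he, hii, hjj, hij, if_pos rfl, if_true, if_false]
      ring
    · have hij : ¬ i = j := fun h => hjj (h.symm.trans hii)
      have hij' : ¬ i₀ = j := fun h => hjj h.symm
      simp only [hv, he, hii, hjj, hij, hij', if_pos rfl, if_neg hjj, if_neg hij, if_neg hij',
        if_true, if_false]
      ring
    · have hij : ¬ i = j := fun h => hii (h.trans hjj)
      simp only [hv, he, hii, hjj, hij, if_pos rfl, if_neg hii, if_neg hij, if_true, if_false]
      ring
    · by_cases hij : i = j <;>
        simp only [hv, he, hii, hjj, hij, if_neg hii, if_neg hjj, if_true, if_false,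
          if_pos rfl] <;>
      first
        | ring
        | (rw [if_neg hij]; ring)
  have s00 : ∑ j, (β * v j + γ * e j) * v j = β * r2 := by
    rw [show (fun j => (β * v j + γ * e j) * v j)
        = fun j => β * (v j * v j) + γ * (e j * v j) from funext fun j => by ring]
    rw [Finset.sum_add_distrib, ← Finset.mul_sum, ← Finset.mul_sum, hvv, hev]
    ring
  have s01 : ∑ j, (β * v j + γ * e j) * e j = γ := by
    rw [show (fun j => (β * v j + γ * e j) * e j)
        = fun j => β * (v j * e j) + γ * (e j * e j) from funext fun j => by ring]
    rw [Finset.sum_add_distrib, ← Finset.mul_sum, ← Finset.mul_sum, hve, hee]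
    ring
  have s10 : ∑ j, (γ * v j + (d - α) * e j) * v j = γ * r2 := by
    rw [show (fun j => (γ * v j + (d - α) * e j) * v j)
        = fun j => γ * (v j * v j) + (d - α) * (e j * v j) from funext fun j => by ring]
    rw [Finset.sum_add_distrib, ← Finset.mul_sum, ← Finset.mul_sum, hvv, hev]
    ring
  have s11 : ∑ j, (γ * v j + (d - α) * e j) * e j = d - α := by
    rw [show (fun j => (γ * v j + (d - α) * e j) * e j)
        = fun j => γ * (v j * e j) + (d - α) * (e j * e j) from funext fun j => by ring]
    rw [Finset.sum_add_distrib, ← Finset.mul_sum, ← Finset.mul_sum, hve, hee]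
    ring
  have hBA : B * A = Matrix.of ![![β * r2, γ], ![γ * r2, d - α]] := by
    ext k l
    fin_cases k <;> fin_cases l <;>
      simp only [Matrix.mul_apply, hA, hB, Matrix.of_apply, Matrix.cons_val_zero,
        Matrix.cons_val_one, Matrix.head_cons, Fin.isValue, Fin.zero_eta, Fin.mk_one,
        Matrix.cons_val', Matrix.empty_val', Matrix.cons_val_fin_one]
    · exact s00
    · exact s01
    · exact s10
    · exact s11
  have hM2 : M = α • ((1 : Matrix (Fin m) (Fin m) ℝ) + A * (α⁻¹ • B)) := by
    rw [smul_add, hMAB, Matrix.mul_smul, smul_smul, mul_inv_cancel₀ hα, one_smul]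
  rw [hM2, Matrix.det_smul, Matrix.det_one_add_mul_comm, Matrix.smul_mul, hBA]
  rw [Matrix.det_fin_two]
  simp only [Matrix.add_apply, Matrix.smul_apply, Matrix.one_apply, Matrix.of_apply,
    Matrix.cons_val_zero, Matrix.cons_val_one, Matrix.head_cons, smul_eq_mul,
    Fintype.card_fin, if_pos rfl, Matrix.cons_val', Matrix.empty_val',
    Matrix.cons_val_fin_one, Fin.isValue]
  norm_num
  obtain ⟨k, rfl⟩ : ∃ k, m = k + 2 := ⟨m - 2, by omega⟩
  rw [show k + 2 - 2 = k by omega, pow_add]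
  field_simp
  ring
end det

lemma arith_aux (k : ℕ) (X T a b C r2 : ℝ) (hX : 0 < X) (hT : 0 < T) (hTr : T = 1 - r2) :
    (2 * C * b * X ^ a * T ^ (b - 1)) ^ k *
        ((-(C * a * (a - 1)) * X ^ (a - 2) * T ^ b) *
            (2 * C * b * X ^ a * T ^ (b - 1) +
              (-(4 * C * b * (b - 1)) * X ^ a * T ^ (b - 2)) * r2)
          - (2 * C * a * b * X ^ (a - 1) * T ^ (b - 1)) ^ 2 * r2)
      = 2 ^ (k + 1) * C ^ (k + 2) * a * b ^ (k + 1) *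
          X ^ (a * ((k : ℝ) + 2) - 2) * T ^ ((b - 1) * ((k : ℝ) + 2)) *
          (1 - a + (1 - 2 * b - a) * r2) := by
  have e1 : (2 * C * b * X ^ a * T ^ (b - 1)) ^ k
      = 2 ^ k * C ^ k * b ^ k * X ^ (a * (k : ℝ)) * T ^ ((b - 1) * (k : ℝ)) := by
    rw [mul_pow, mul_pow, mul_pow, ← Real.rpow_natCast (X ^ a) k,
      ← Real.rpow_natCast (T ^ (b - 1)) k, ← Real.rpow_mul hX.le, ← Real.rpow_mul hT.le, mul_pow]
  have hXa : X ^ a = X ^ (a - 2) * (X * X) := by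
    rw [show a = (a - 2) + 2 by ring, Real.rpow_add hX, show ((a:ℝ) - 2) + 2 - 2 = a - 2 by ring,
      show (2:ℝ) = ((2:ℕ):ℝ) by norm_num, Real.rpow_natCast]
    ring
  have hXa1 : X ^ (a - 1) = X ^ (a - 2) * X := by
    rw [show a - 1 = (a - 2) + 1 by ring, Real.rpow_add hX, Real.rpow_one]
  have hTb : T ^ b = T ^ (b - 2) * (T * T) := by
    rw [show b = (b - 2) + 2 by ring, Real.rpow_add hT, show ((b:ℝ) - 2) + 2 - 2 = b - 2 by ring,
      show (2:ℝ) = ((2:ℕ):ℝ) by norm_num, Real.rpow_natCast]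
    ring
  have hTb1 : T ^ (b - 1) = T ^ (b - 2) * T := by
    rw [show b - 1 = (b - 2) + 1 by ring, Real.rpow_add hT, Real.rpow_one]
  have hR1 : X ^ (a * ((k : ℝ) + 2) - 2)
      = X ^ (a * (k : ℝ)) * (X ^ (a - 2) * (X ^ (a - 2) * (X * X))) := by
    rw [← hXa, ← Real.rpow_add hX, ← Real.rpow_add hX]
    congr 1
    ring
  have hR2 : T ^ ((b - 1) * ((k : ℝ) + 2))
      = T ^ ((b - 1) * (k : ℝ)) * (T ^ (b - 2) * (T ^ (b - 2) * (T * T))) := by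
    rw [← hTb, ← Real.rpow_add hT, ← Real.rpow_add hT]
    congr 1
    ring
  rw [e1, hXa, hXa1, hTb, hTb1, hR1, hR2, hTr]
  ring


/-- Hessian determinant of the supersolution
`w(x', x_{n-1}) = C x_{n-1} − C x_{n-1}^a (1 − |x'|²)^b`:
`det(D²w) = 2^{n-2} C^{n-1} a b^{n-2} x_{n-1}^{a(n-1)-2} (1−r²)^{(b−1)(n−1)}
(1 − a + (1 − 2b − a) r²)` with `r = |x'|`. -/
theorem stmt_16 {n : ℕ} (hn : 3 ≤ n) (a b C : ℝ) (ha0 : 0 < a) (ha1 : a < 1)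
    (hb : 0 < b) (hC : 0 < C)
    (i₀ : Fin (n - 1)) (hi₀ : (i₀ : ℕ) = n - 2)
    (x : EuclideanSpace ℝ (Fin (n - 1))) (hx : 0 < x i₀)
    (hr : ∑ i ∈ Finset.univ.erase i₀, (x i) ^ 2 < 1) :
    hessianDet
        (fun y => C * y i₀ -
          C * (y i₀) ^ a * (1 - ∑ i ∈ Finset.univ.erase i₀, (y i) ^ 2) ^ b) x =
      2 ^ (n - 2) * C ^ (n - 1) * a * b ^ (n - 2) *
        (x i₀) ^ (a * ((n : ℝ) - 1) - 2) *
        (1 - ∑ i ∈ Finset.univ.erase i₀, (x i) ^ 2) ^ ((b - 1) * ((n : ℝ) - 1)) *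
        (1 - a + (1 - 2 * b - a) * ∑ i ∈ Finset.univ.erase i₀, (x i) ^ 2) := by
  classical
  have hm2 : 2 ≤ n - 1 := by omega
  have hx0 : x i₀ ≠ 0 := ne_of_gt hx
  have hSx : Sq i₀ x < 1 := hr
  have ht : (0:ℝ) < 1 - Sq i₀ x := by linarith
  have ht0 : (1 - Sq i₀ x) ≠ 0 := ne_of_gt ht
  have hcont : Continuous (Sq i₀) := by
    unfold Sq
    exact continuous_finset_sum _ fun i _ =>
      ((EuclideanSpace.proj i : EuclideanSpace ℝ (Fin (n-1)) →L[ℝ] ℝ).continuous.pow 2)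
  have hev : ∀ᶠ y in nhds x, 0 < y i₀ ∧ Sq i₀ y < 1 := by
    have hopen : IsOpen {y : EuclideanSpace ℝ (Fin (n-1)) | 0 < y i₀ ∧ Sq i₀ y < 1} :=
      (isOpen_lt continuous_const
        (EuclideanSpace.proj i₀ : EuclideanSpace ℝ (Fin (n-1)) →L[ℝ] ℝ).continuous).inter
        (isOpen_lt hcont continuous_const)
    exact Filter.eventually_iff.2 (hopen.mem_nhds ⟨hx, hSx⟩)
  show (Matrix.of fun i j : Fin (n-1) =>
      fderiv ℝ (fun y => fderiv ℝ
        (fun y : EuclideanSpace ℝ (Fin (n-1)) =>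
          C * y i₀ - C * (y i₀) ^ a * (1 - Sq i₀ y) ^ b) y
        (EuclideanSpace.single i 1)) x (EuclideanSpace.single j 1)).det
    = 2 ^ (n - 2) * C ^ (n - 1) * a * b ^ (n - 2) *
        (x i₀) ^ (a * ((n : ℝ) - 1) - 2) *
        (1 - Sq i₀ x) ^ ((b - 1) * ((n : ℝ) - 1)) *
        (1 - a + (1 - 2 * b - a) * Sq i₀ x)
  have hMentry : ∀ i j : Fin (n-1),
      (Matrix.of fun i j : Fin (n-1) =>
        fderiv ℝ (fun y => fderiv ℝ
          (fun y : EuclideanSpace ℝ (Fin (n-1)) =>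
            C * y i₀ - C * (y i₀) ^ a * (1 - Sq i₀ y) ^ b) y
          (EuclideanSpace.single i 1)) x (EuclideanSpace.single j 1)) i j
      = if i = i₀ then
          (if j = i₀ then -(C * a * (a - 1)) * (x i₀) ^ (a - 1 - 1) * (1 - Sq i₀ x) ^ b
            else 2 * C * a * b * (x i₀) ^ (a - 1) * (1 - Sq i₀ x) ^ (b - 1) * x j)
        else (if j = i₀ then 2 * C * a * b * (x i₀) ^ (a - 1) * (1 - Sq i₀ x) ^ (b - 1) * x i
          else (if i = j then 2 * C * b * (x i₀) ^ a * (1 - Sq i₀ x) ^ (b - 1) else 0)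
            + (-(4 * C * b * (b - 1)) * (x i₀) ^ a * (1 - Sq i₀ x) ^ (b - 1 - 1))
              * (x i * x j)) := by
    intro i j
    have heq : (fun y => fderiv ℝ
        (fun y : EuclideanSpace ℝ (Fin (n-1)) =>
          C * y i₀ - C * (y i₀) ^ a * (1 - Sq i₀ y) ^ b) y
        (EuclideanSpace.single i 1))
        =ᶠ[nhds x] (fun y => if i = i₀ then C - C * a * (y i₀) ^ (a - 1) * (1 - Sq i₀ y) ^ b
          else 2 * C * b * (y i₀) ^ a * (1 - Sq i₀ y) ^ (b - 1) * y i) :=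
      hev.mono fun y hy =>
        fderiv_u_eval i₀ a b C y (ne_of_gt hy.1) (ne_of_gt (by linarith [hy.2])) i
    show fderiv ℝ _ x (EuclideanSpace.single j 1) = _
    rw [heq.fderiv_eq]
    by_cases hi : i = i₀
    · rw [if_pos hi,
        show (fun y : EuclideanSpace ℝ (Fin (n-1)) =>
            if i = i₀ then C - C * a * (y i₀) ^ (a - 1) * (1 - Sq i₀ y) ^ b
            else 2 * C * b * (y i₀) ^ a * (1 - Sq i₀ y) ^ (b - 1) * y i)
          = fun y : EuclideanSpace ℝ (Fin (n-1)) =>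
            C - C * a * (y i₀) ^ (a - 1) * (1 - Sq i₀ y) ^ b
          from funext fun y => if_pos hi]
      exact fderiv_gi0_eval i₀ a b C x hx0 ht0 j
    · rw [if_neg hi,
        show (fun y : EuclideanSpace ℝ (Fin (n-1)) =>
            if i = i₀ then C - C * a * (y i₀) ^ (a - 1) * (1 - Sq i₀ y) ^ b
            else 2 * C * b * (y i₀) ^ a * (1 - Sq i₀ y) ^ (b - 1) * y i)
          = fun y : EuclideanSpace ℝ (Fin (n-1)) =>
            2 * C * b * (y i₀) ^ a * (1 - Sq i₀ y) ^ (b - 1) * y i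
          from funext fun y => if_neg hi]
      exact fderiv_gne_eval i₀ a b C i hi x hx0 ht0 j
  have hαne : (2 * C * b * (x i₀) ^ a * (1 - Sq i₀ x) ^ (b - 1)) ≠ 0 := by
    have h1 : (0:ℝ) < (x i₀) ^ a := Real.rpow_pos_of_pos hx a
    have h2 : (0:ℝ) < (1 - Sq i₀ x) ^ (b - 1) := Real.rpow_pos_of_pos ht (b - 1)
    positivity
  rw [det_aux hm2 i₀ (fun j => x j)
      (2 * C * b * (x i₀) ^ a * (1 - Sq i₀ x) ^ (b - 1))
      (-(4 * C * b * (b - 1)) * (x i₀) ^ a * (1 - Sq i₀ x) ^ (b - 1 - 1))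
      (2 * C * a * b * (x i₀) ^ (a - 1) * (1 - Sq i₀ x) ^ (b - 1))
      (-(C * a * (a - 1)) * (x i₀) ^ (a - 1 - 1) * (1 - Sq i₀ x) ^ b)
      (Sq i₀ x) hαne rfl _ hMentry]
  rw [show a - 1 - 1 = a - 2 from by ring, show b - 1 - 1 = b - 2 from by ring]
  rw [show n - 1 - 2 = n - 3 from by omega]
  rw [arith_aux (n - 3) (x i₀) (1 - Sq i₀ x) a b C (Sq i₀ x) hx ht rfl]
  rw [show n - 3 + 1 = n - 2 from by omega, show n - 3 + 2 = n - 1 from by omega,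
    show ((n - 3 : ℕ) : ℝ) + 2 = (n : ℝ) - 1 from by
      rw [Nat.cast_sub (by omega : 3 ≤ n)]; push_cast; ring]
end
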